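/- arXiv:1804.04042 — 2 statements merged into one kernel-verified Lean document; each statement's English description precedes it below -/
import Mathlib

section
/- Let Φ and Ψ be quantum Latin squares of dimension n. Then Φ and Ψ are orthogonal if and only if they are GRMZ-orthogonal, i.e. if and only if all three of the following equations hold: (C) ∑_{i,j=0}^{n−1} |Φ_ij⟩⟨Φ_ij| ⊗ |Ψ_ij⟩⟨Ψ_ij| = I on ℂ^n ⊗ ℂ^n; (B) ∑_{i,j,p=0}^{n−1} ⟨Φ_ij|Φ_pj⟩ · |Ψ_ij⟩⟨Ψ_pj| ⊗ |i⟩⟨p| = I on ℂ^n ⊗ ℂ^n; (A) ∑_{i,j,p=0}^{n−1} ⟨Ψ_ij|Ψ_pj⟩ · |Φ_ij⟩⟨Φ_pj| ⊗ |i⟩⟨p| = I on ℂ^n ⊗ ℂ^n. -/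
open scoped ComplexConjugate Kronecker

noncomputable section

/-- A quantum Latin square of dimension `n`: an `n × n` array of vectors of `ℂ^n`
such that every row and every column is an orthonormal basis of `ℂ^n`. -/
def IsQLS (n : ℕ) (Φ : Fin n → Fin n → EuclideanSpace ℂ (Fin n)) : Prop :=
  (∀ i, Orthonormal ℂ (fun j => Φ i j)) ∧
  (∀ i, Submodule.span ℂ (Set.range fun j => Φ i j) = ⊤) ∧
  (∀ j, Orthonormal ℂ (fun i => Φ i j)) ∧
  (∀ j, Submodule.span ℂ (Set.range fun i => Φ i j) = ⊤)

/-- The tensor (Kronecker) product of two vectors of `ℂ^n`, as a vector of `ℂ^n ⊗ ℂ^n`. -/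
def tensorVec {n : ℕ} (u v : EuclideanSpace ℂ (Fin n)) :
    EuclideanSpace ℂ (Fin n × Fin n) :=
  WithLp.toLp 2 fun p => u p.1 * v p.2

/-- Two quantum Latin squares are orthogonal when the family `|Φ_ij⟩ ⊗ |Ψ_ij⟩` is an
orthonormal basis of `ℂ^n ⊗ ℂ^n`. -/
def QLSOrthogonal {n : ℕ} (Φ Ψ : Fin n → Fin n → EuclideanSpace ℂ (Fin n)) : Prop :=
  Orthonormal ℂ (fun p : Fin n × Fin n => tensorVec (Φ p.1 p.2) (Ψ p.1 p.2)) ∧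
  Submodule.span ℂ
    (Set.range fun p : Fin n × Fin n => tensorVec (Φ p.1 p.2) (Ψ p.1 p.2)) = ⊤

/-- The outer product `|u⟩⟨v|` as a matrix. -/
def outerMat {ι : Type*} (u v : ι → ℂ) : Matrix ι ι ℂ :=
  Matrix.of fun x y => u x * (starRingEnd ℂ) (v y)

namespace QLSAux

open Matrix

lemma inner_eq_sum {ι : Type*} [Fintype ι] (u v : EuclideanSpace ℂ ι) :
    (inner ℂ u v : ℂ) = ∑ x, conj (u x) * v x := by
  simp [PiLp.inner_apply, RCLike.inner_apply, mul_comm]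

/-- Key frame lemma: for a square family, orthonormality is equivalent to the
resolution-of-identity condition. -/
lemma orthonormal_iff_frame {ι : Type*} [Fintype ι] [DecidableEq ι]
    (v : ι → EuclideanSpace ℂ ι) :
    Orthonormal ℂ v ↔
      ∀ x y, (∑ j, v j x * conj (v j y)) = if x = y then (1:ℂ) else 0 := by
  classical
  set U : Matrix ι ι ℂ := Matrix.of fun x j => v j x with hU
  have h1 : Orthonormal ℂ v ↔ Uᴴ * U = 1 := by
    rw [orthonormal_iff_ite]
    constructor
    · intro h
      ext j l
      have := h j l
      rw [inner_eq_sum] at this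
      simpa [Matrix.mul_apply, Matrix.conjTranspose_apply, hU, Matrix.one_apply] using this
    · intro h j l
      have := Matrix.ext_iff.2 h j l
      rw [inner_eq_sum]
      simpa [Matrix.mul_apply, Matrix.conjTranspose_apply, hU, Matrix.one_apply] using this
  have h2 : (U * Uᴴ = 1) ↔
      ∀ x y, (∑ j, v j x * conj (v j y)) = if x = y then (1:ℂ) else 0 := by
    constructor
    · intro h x y
      have := Matrix.ext_iff.2 h x y
      simpa [Matrix.mul_apply, Matrix.conjTranspose_apply, hU, Matrix.one_apply] using this
    · intro h
      ext x y
      simpa [Matrix.mul_apply, Matrix.conjTranspose_apply, hU, Matrix.one_apply] using h x y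
  rw [h1, ← mul_eq_one_comm, h2]

/-- Equations (B) and (A) hold for any pair of QLS, unconditionally. -/
lemma eqBA {n : ℕ} (Φ Ψ : Fin n → Fin n → EuclideanSpace ℂ (Fin n))
    (hcol : ∀ j, Orthonormal ℂ (fun i => Φ i j))
    (hrow : ∀ i, Orthonormal ℂ (fun j => Ψ i j)) :
    ∑ i : Fin n, ∑ j : Fin n, ∑ p : Fin n,
        (inner ℂ (Φ i j) (Φ p j) : ℂ) •
          ((outerMat (Ψ i j) (Ψ p j)) ⊗ₖ Matrix.single i p (1 : ℂ)) =
      (1 : Matrix (Fin n × Fin n) (Fin n × Fin n) ℂ) := by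
  classical
  have hin : ∀ (j i p : Fin n), (inner ℂ (Φ i j) (Φ p j) : ℂ) = if i = p then 1 else 0 :=
    fun j => orthonormal_iff_ite.mp (hcol j)
  simp_rw [fun i j p => hin j i p, ite_smul, one_smul, zero_smul, Finset.sum_ite_eq,
    Finset.mem_univ, if_true]
  ext ⟨x, k⟩ ⟨y, q⟩
  have hframe := (orthonormal_iff_frame (fun j => Ψ k j)).mp (hrow k) x y
  simp only [Matrix.sum_apply, Matrix.kroneckerMap_apply, outerMat, Matrix.of_apply,
    Matrix.single, Matrix.one_apply, mul_ite, mul_one, mul_zero]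
  by_cases hkq : k = q
  · subst hkq
    simp only [and_self, Prod.mk.injEq]
    rw [Finset.sum_comm]
    simp only [Finset.sum_ite_eq', Finset.mem_univ, if_true]
    simpa using hframe
  · simp only [Prod.mk.injEq]
    rw [if_neg (by tauto)]
    refine Finset.sum_eq_zero fun i _ => Finset.sum_eq_zero fun j _ => ?_
    rw [if_neg (fun h => hkq (h.1.symm.trans h.2))]

end QLSAux

/-- Two QLS `Φ, Ψ` are orthogonal iff they are GRMZ-orthogonal, i.e. iff the three
partial-trace equations (C), (B), (A) all hold. -/
theorem qls_orthogonal_iff_GRMZ (n : ℕ)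
    (Φ Ψ : Fin n → Fin n → EuclideanSpace ℂ (Fin n))
    (hΦ : IsQLS n Φ) (hΨ : IsQLS n Ψ) :
    QLSOrthogonal Φ Ψ ↔
      ((∑ i : Fin n, ∑ j : Fin n,
          (outerMat (Φ i j) (Φ i j)) ⊗ₖ (outerMat (Ψ i j) (Ψ i j)) =
        (1 : Matrix (Fin n × Fin n) (Fin n × Fin n) ℂ)) ∧
      (∑ i : Fin n, ∑ j : Fin n, ∑ p : Fin n,
          (inner ℂ (Φ i j) (Φ p j) : ℂ) •
            ((outerMat (Ψ i j) (Ψ p j)) ⊗ₖ Matrix.single i p (1 : ℂ)) =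
        (1 : Matrix (Fin n × Fin n) (Fin n × Fin n) ℂ)) ∧
      (∑ i : Fin n, ∑ j : Fin n, ∑ p : Fin n,
          (inner ℂ (Ψ i j) (Ψ p j) : ℂ) •
            ((outerMat (Φ i j) (Φ p j)) ⊗ₖ Matrix.single i p (1 : ℂ)) =
        (1 : Matrix (Fin n × Fin n) (Fin n × Fin n) ℂ))) := by
  classical
  obtain ⟨hΦr, hΦrs, hΦc, hΦcs⟩ := hΦ
  obtain ⟨hΨr, hΨrs, hΨc, hΨcs⟩ := hΨ
  set f : Fin n × Fin n → EuclideanSpace ℂ (Fin n × Fin n) :=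
    fun p => tensorVec (Φ p.1 p.2) (Ψ p.1 p.2) with hf
  -- entrywise identification of the (C) matrix with the frame matrix of `f`
  have hent : ∀ (x y : Fin n × Fin n),
      (∑ i : Fin n, ∑ j : Fin n,
          (outerMat (Φ i j) (Φ i j)) ⊗ₖ (outerMat (Ψ i j) (Ψ i j))) x y =
      ∑ p : Fin n × Fin n, f p x * conj (f p y) := by
    intro x y
    rw [Fintype.sum_prod_type]
    simp only [Matrix.sum_apply, Matrix.kroneckerMap_apply, outerMat, Matrix.of_apply,
      hf, tensorVec, WithLp.ofLp_toLp, map_mul]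
    refine Finset.sum_congr rfl fun i _ => Finset.sum_congr rfl fun j _ => ?_
    ring
  have hCiff : (∑ i : Fin n, ∑ j : Fin n,
          (outerMat (Φ i j) (Φ i j)) ⊗ₖ (outerMat (Ψ i j) (Ψ i j)) =
        (1 : Matrix (Fin n × Fin n) (Fin n × Fin n) ℂ)) ↔ Orthonormal ℂ f := by
    rw [QLSAux.orthonormal_iff_frame]
    constructor
    · intro h x y
      rw [← hent x y, h, Matrix.one_apply]
    · intro h
      ext x y
      rw [hent x y, h x y, Matrix.one_apply]
  have hspan : Orthonormal ℂ f → Submodule.span ℂ (Set.range f) = ⊤ := fun h =>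
    h.linearIndependent.span_eq_top_of_card_eq_finrank' (by simp)
  constructor
  · rintro ⟨horth, -⟩
    refine ⟨hCiff.mpr horth, QLSAux.eqBA Φ Ψ hΦc hΨr, QLSAux.eqBA Ψ Φ hΨc hΦr⟩
  · rintro ⟨hC, -, -⟩
    exact ⟨hCiff.mp hC, hspan (hCiff.mp hC)⟩
end
end

section
/- Let n ≥ 2 and let (Φ^k)_{k∈{0,…,m−1}} be a family of mutually orthogonal quantum Latin squares of dimension n such that every square has the ordered computational basis as its first row, i.e. |Φ^k_{0i}⟩ = |i⟩ for all k and all i ∈ {0,…,n−1}. Then for all distinct k, l, the entries in position (1,0) are orthogonal: ⟨Φ^k_{10}|Φ^l_{10}⟩ = 0; moreover each |Φ^k_{10}⟩ is orthogonal to |0⟩, so the m+1 vectors |0⟩, |Φ^0_{10}⟩, …, |Φ^{m−1}_{10}⟩ are pairwise orthogonal. -/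
open scoped ComplexConjugate Kronecker

noncomputable section

lemma inner_tensorVec {n : ℕ} (u v u' v' : EuclideanSpace ℂ (Fin n)) :
    (inner ℂ (tensorVec u v) (tensorVec u' v') : ℂ) = inner ℂ u u' * inner ℂ v v' := by
  simp only [PiLp.inner_apply, RCLike.inner_apply, tensorVec, PiLp.toLp_apply, map_mul]
  rw [Finset.sum_mul_sum, Fintype.sum_prod_type]
  exact Finset.sum_congr rfl fun p _ => Finset.sum_congr rfl fun q _ => by ring

/-- If `(Φ^k)_{k < m}` are mutually orthogonal QLS of dimension `n ≥ 2` whose first row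
is the ordered computational basis, then the `(1,0)` entries of distinct squares are
orthogonal, and each `(1,0)` entry is orthogonal to `|0⟩`; hence the `m + 1` vectors
`|0⟩, |Φ^0_{10}⟩, …, |Φ^{m-1}_{10}⟩` are pairwise orthogonal. -/
theorem moqls_first_column_orthogonal (n m : ℕ) (hn : 2 ≤ n)
    (Φ : Fin m → Fin n → Fin n → EuclideanSpace ℂ (Fin n))
    (hQLS : ∀ k, IsQLS n (Φ k))
    (hMO : ∀ k l, k ≠ l → QLSOrthogonal (Φ k) (Φ l))
    (hrow : ∀ k (i : Fin n), Φ k ⟨0, by omega⟩ i = EuclideanSpace.single i 1) :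
    (∀ k l, k ≠ l →
      (inner ℂ (Φ k ⟨1, by omega⟩ ⟨0, by omega⟩) (Φ l ⟨1, by omega⟩ ⟨0, by omega⟩) : ℂ) = 0) ∧
    (∀ k,
      (inner ℂ (EuclideanSpace.single (⟨0, by omega⟩ : Fin n) (1 : ℂ))
        (Φ k ⟨1, by omega⟩ ⟨0, by omega⟩) : ℂ) = 0) := by
  have hi0 : (0 : ℕ) < n := by omega
  have hi1 : (1 : ℕ) < n := by omega
  have hne01 : (⟨0, hi0⟩ : Fin n) ≠ ⟨1, hi1⟩ := by
    simp [Fin.ext_iff]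
  constructor
  · intro k l hkl
    obtain ⟨hon, hsp⟩ := hMO k l hkl
    set u := Φ k ⟨1, hi1⟩ ⟨0, hi0⟩ with hu
    set v := Φ l ⟨1, hi1⟩ ⟨0, hi0⟩ with hv
    set b : OrthonormalBasis (Fin n × Fin n) ℂ (EuclideanSpace ℂ (Fin n × Fin n)) :=
      OrthonormalBasis.mk hon (by rw [hsp]) with hb
    set x : EuclideanSpace ℂ (Fin n × Fin n) := tensorVec u v with hx
    have huu : (inner ℂ u u : ℂ) = 1 := by
      rw [inner_self_eq_norm_sq_to_K, ((hQLS k).2.2.1 ⟨0, hi0⟩).1 ⟨1, hi1⟩]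
      norm_num
    have hvv : (inner ℂ v v : ℂ) = 1 := by
      rw [inner_self_eq_norm_sq_to_K, ((hQLS l).2.2.1 ⟨0, hi0⟩).1 ⟨1, hi1⟩]
      norm_num
    have hsum : ∑ p : Fin n × Fin n, (inner ℂ x (b p) : ℂ) * inner ℂ (b p) x = 1 := by
      rw [b.sum_inner_mul_inner x x, hx, inner_tensorVec, huu, hvv, one_mul]
    -- real nonneg version
    have hterm : ∀ p : Fin n × Fin n,
        (inner ℂ x (b p) : ℂ) * inner ℂ (b p) x = (Complex.normSq (inner ℂ (b p) x) : ℂ) := by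
      intro p
      rw [← inner_conj_symm x (b p)]
      simp [Complex.normSq_eq_conj_mul_self]
    have hsumR : ∑ p : Fin n × Fin n, Complex.normSq ((inner ℂ (b p) x : ℂ)) = 1 := by
      have h2 := hsum
      simp only [hterm] at h2
      exact_mod_cast h2
    have hb10 : (inner ℂ (b (⟨1, hi1⟩, ⟨0, hi0⟩)) x : ℂ) = 1 := by
      rw [hb, OrthonormalBasis.coe_mk, hx, inner_tensorVec]
      rw [show (inner ℂ (Φ k (⟨1,hi1⟩ : Fin n) ⟨0,hi0⟩) u : ℂ) = 1 from huu,
        show (inner ℂ (Φ l (⟨1,hi1⟩ : Fin n) ⟨0,hi0⟩) v : ℂ) = 1 from hvv]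
      norm_num
    have hzero : ∀ p : Fin n × Fin n, p ≠ (⟨1, hi1⟩, ⟨0, hi0⟩) →
        (inner ℂ (b p) x : ℂ) = 0 := by
      intro p hp
      have hsplit := Finset.add_sum_erase Finset.univ
        (fun p => Complex.normSq ((inner ℂ (b p) x : ℂ))) (Finset.mem_univ (⟨1, hi1⟩, ⟨0, hi0⟩))
      simp only [hsumR, hb10, Complex.normSq_one] at hsplit
      have hrest : ∑ q ∈ Finset.univ.erase (⟨1, hi1⟩, ⟨0, hi0⟩),
          Complex.normSq ((inner ℂ (b q) x : ℂ)) = 0 := by linarith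
      have hq0 := (Finset.sum_eq_zero_iff_of_nonneg
        (fun q _ => Complex.normSq_nonneg _)).mp hrest p
        (Finset.mem_erase.mpr ⟨hp, Finset.mem_univ _⟩)
      exact Complex.normSq_eq_zero.mp hq0
    have key : ∀ j : Fin n, u j * v j = 0 := by
      intro j
      have hne : ((⟨0, hi0⟩ : Fin n), j) ≠ ((⟨1, hi1⟩ : Fin n), (⟨0, hi0⟩ : Fin n)) := by
        intro h
        exact hne01 (congrArg Prod.fst h)
      have h0 := hzero (⟨0, hi0⟩, j) hne
      rw [hb, OrthonormalBasis.coe_mk, hx, inner_tensorVec] at h0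
      simp only [hrow, EuclideanSpace.inner_single_left, map_one, one_mul] at h0
      exact h0
    rw [PiLp.inner_apply]
    refine Finset.sum_eq_zero fun j _ => ?_
    rcases mul_eq_zero.mp (key j) with h | h
    · simp [RCLike.inner_apply, h]
    · simp [RCLike.inner_apply, h]
  · intro k
    have h := ((hQLS k).2.2.1 ⟨0, hi0⟩).2 hne01
    simp only [hrow] at h
    exact h
end
end
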